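/- Suppose A ≡ A₀ is a constant function on 𝕋ⁿ and P ∈ ℝ^{d×n} (n > d) has ℚ-linearly independent columns. Then for every ε > 0 there exists a nonzero V ∈ H̄_{P,0}^1(𝕋ⁿ) (in fact a single exponential V = e^{ik̄·y}) such that ‖div(Pᵀ A P∇V)‖²_{L²} / ‖V‖²_{H̄_{P,0}^1} ≤ ε. In particular, the PDE residual norm cannot control the H̄_{P,0}^1 norm. -/
import Mathlib


/-- The projected lattice vector `P k ∈ ℝ^d` (as a point of Euclidean space). -/
noncomputable def projVec {d n : ℕ} (P : Matrix (Fin d) (Fin n) ℝ) (k : Fin n → ℤ) :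
    EuclideanSpace ℝ (Fin d) :=
  (EuclideanSpace.equiv (Fin d) ℝ).symm (P.mulVec fun j => (k j : ℝ))

/-- The columns of `P` are linearly independent over `ℚ`. -/
def QLinIndep {d n : ℕ} (P : Matrix (Fin d) (Fin n) ℝ) : Prop :=
  ∀ μ : Fin n → ℚ, (∀ i, ∑ j, P i j * (μ j : ℝ) = 0) → μ = 0

lemma projVec_sub {d n : ℕ} (P : Matrix (Fin d) (Fin n) ℝ) (a b : Fin n → ℤ) :
    projVec P (a - b) = projVec P a - projVec P b := by
  simp only [projVec]
  rw [← map_sub, ← Matrix.mulVec_sub]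
  congr 1
  funext j
  push_cast [Pi.sub_apply]
  rfl

lemma projVec_ne_zero {d n : ℕ} {P : Matrix (Fin d) (Fin n) ℝ} (hP : QLinIndep P)
    {k : Fin n → ℤ} (hk : k ≠ 0) : projVec P k ≠ 0 := by
  intro h
  apply hk
  have h0 : P.mulVec (fun j => (k j : ℝ)) = 0 := by
    have := congrArg (EuclideanSpace.equiv (Fin d) ℝ) h
    simpa [projVec] using this
  have hmu := hP (fun j => (k j : ℚ)) (by
    intro i
    have := congrFun h0 i
    simp [Matrix.mulVec, dotProduct] at this
    push_cast
    simpa using this)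
  funext j
  have : ((k j : ℚ)) = 0 := congrFun hmu j
  exact_mod_cast this

lemma small_projVec {d n : ℕ} (hdn : d < n) (P : Matrix (Fin d) (Fin n) ℝ) :
    ∀ δ : ℝ, 0 < δ → ∃ k : Fin n → ℤ, k ≠ 0 ∧ ‖projVec P k‖ ≤ δ := by
  intro δ hδ
  obtain ⟨x, hx0, hx⟩ : ∃ x : Fin n → ℝ, x ≠ 0 ∧ P.mulVec x = 0 := by
    have h : ¬ Function.Injective P.mulVecLin := by
      intro h
      have := LinearMap.finrank_le_finrank_of_injective h
      simp [Module.finrank_pi] at this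
      omega
    rw [← LinearMap.ker_eq_bot] at h
    obtain ⟨x, hx, hx0⟩ := Submodule.exists_mem_ne_zero_of_ne_bot h
    exact ⟨x, hx0, hx⟩
  obtain ⟨j₀, hj₀⟩ : ∃ j, x j ≠ 0 := Function.ne_iff.mp hx0
  set K : ℕ → Fin n → ℤ := fun m j => ⌊(m : ℝ) * x j + 1/2⌋ with hK
  set u : ℕ → EuclideanSpace ℝ (Fin d) := fun m => projVec P (K m) with hu
  set s : Fin d → ℝ := fun i => ∑ j, |P i j| with hs
  set R : ℝ := Real.sqrt (∑ i, s i ^ 2) with hR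
  have hround : ∀ (t : ℝ), |(⌊t + 1/2⌋ : ℝ) - t| ≤ 1/2 := by
    intro t
    have h1 := Int.floor_le (t + 1/2)
    have h2 := Int.lt_floor_add_one (t + 1/2)
    rw [abs_le]; constructor <;> linarith
  have hub : ∀ m, ‖u m‖ ≤ R := by
    intro m
    have hcomp : ∀ i, |u m i| ≤ s i := by
      intro i
      have hmx : ∑ j, P i j * ((m : ℝ) * x j) = 0 := by
        have hxi := congrFun hx i
        simp only [Matrix.mulVec, dotProduct, Pi.zero_apply] at hxi
        calc ∑ j, P i j * ((m : ℝ) * x j) = (m : ℝ) * ∑ j, P i j * x j := by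
              rw [Finset.mul_sum]; congr 1; funext j; ring
          _ = 0 := by rw [hxi, mul_zero]
      have humi : u m i = ∑ j, P i j * ((K m j : ℝ) - (m : ℝ) * x j) := by
        simp only [hu, projVec]
        show P.mulVec _ i = _
        simp only [Matrix.mulVec, dotProduct]
        rw [show ∑ j, P i j * ((K m j : ℝ) - (m:ℝ) * x j)
            = (∑ j, P i j * (K m j : ℝ)) - ∑ j, P i j * ((m:ℝ) * x j) by
          rw [← Finset.sum_sub_distrib]; congr 1; funext j; ring, hmx, sub_zero]
      rw [humi, hs]
      calc |∑ j, P i j * ((K m j : ℝ) - (m : ℝ) * x j)|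
          ≤ ∑ j, |P i j * ((K m j : ℝ) - (m : ℝ) * x j)| := Finset.abs_sum_le_sum_abs _ _
        _ ≤ ∑ j, |P i j| := by
            apply Finset.sum_le_sum
            intro j _
            rw [abs_mul]
            have h1 := hround ((m : ℝ) * x j)
            have h2 : |(K m j : ℝ) - (m:ℝ) * x j| ≤ 1/2 := by simpa [hK] using h1
            nlinarith [abs_nonneg (P i j), abs_nonneg ((K m j : ℝ) - (m:ℝ) * x j)]
    rw [EuclideanSpace.norm_eq, hR]
    apply Real.sqrt_le_sqrt
    apply Finset.sum_le_sum
    intro i _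
    have hci := hcomp i
    have h0 : (0:ℝ) ≤ |u m i| := abs_nonneg _
    calc ‖u m i‖ ^ 2 = |u m i| ^ 2 := by rw [Real.norm_eq_abs]
      _ ≤ s i ^ 2 := by nlinarith
  have hbd : Bornology.IsBounded (Metric.closedBall (0 : EuclideanSpace ℝ (Fin d)) R) :=
    Metric.isBounded_closedBall
  have hmem : ∀ m, u m ∈ Metric.closedBall (0 : EuclideanSpace ℝ (Fin d)) R := by
    intro m; rw [Metric.mem_closedBall, dist_zero_right]; exact hub m
  obtain ⟨b, -, φ, hφ, hconv⟩ := tendsto_subseq_of_bounded hbd hmem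
  rw [Metric.tendsto_atTop] at hconv
  obtain ⟨N, hN⟩ := hconv (δ/2) (by linarith)
  set M : ℕ := φ N + N + ⌈1/|x j₀|⌉₊ + 1 with hM
  have hMN : N ≤ M := by omega
  have hd1 : dist (u (φ M)) b < δ/2 := hN M hMN
  have hd2 : dist (u (φ N)) b < δ/2 := hN N le_rfl
  have hxa : (0:ℝ) < |x j₀| := abs_pos.mpr hj₀
  have hgap : (φ N : ℝ) + 1/|x j₀| < (φ M : ℝ) := by
    have h1 : (M : ℕ) ≤ φ M := hφ.le_apply
    have h2 : (1:ℝ)/|x j₀| ≤ ⌈1/|x j₀|⌉₊ := Nat.le_ceil _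
    have h3 : (φ N : ℝ) + (⌈1/|x j₀|⌉₊ : ℝ) + 1 ≤ (M : ℝ) := by
      rw [hM]; push_cast; linarith
    have h4 : (M:ℝ) ≤ (φ M : ℝ) := by exact_mod_cast h1
    linarith
  refine ⟨K (φ M) - K (φ N), ?_, ?_⟩
  · intro hzero
    have hKeq : K (φ M) j₀ = K (φ N) j₀ := by
      have h := congrFun hzero j₀
      simpa [Pi.sub_apply, sub_eq_zero] using h
    set a' : ℝ := (φ N : ℝ) * x j₀
    set b' : ℝ := (φ M : ℝ) * x j₀
    have r1 : |(K (φ M) j₀ : ℝ) - b'| ≤ 1/2 := by simpa [hK] using hround b'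
    have r2 : |(K (φ M) j₀ : ℝ) - a'| ≤ 1/2 := by
      rw [hKeq]; simpa [hK] using hround a'
    have hdiff : 1 < |b' - a'| := by
      have hone : (1/|x j₀|) * |x j₀| = 1 := by
        field_simp
      have : |b' - a'| = ((φ M : ℝ) - φ N) * |x j₀| := by
        rw [show b' - a' = ((φ M : ℝ) - (φ N : ℝ)) * x j₀ by ring, abs_mul,
          abs_of_nonneg (by linarith [one_div_pos.mpr hxa] : (0:ℝ) ≤ (φ M : ℝ) - φ N)]
      rw [this]
      nlinarith
    have htri : |b' - a'| ≤ |b' - (K (φ M) j₀ : ℝ)| + |(K (φ M) j₀ : ℝ) - a'| :=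
      abs_sub_le _ _ _
    have e1 : |a' - b'| = |b' - a'| := abs_sub_comm _ _
    have e2 : |b' - (K (φ M) j₀ : ℝ)| = |(K (φ M) j₀ : ℝ) - b'| := abs_sub_comm _ _
    linarith
  · rw [projVec_sub]
    have : ‖u (φ M) - u (φ N)‖ = dist (u (φ M)) (u (φ N)) := (dist_eq_norm _ _).symm
    rw [show projVec P (K (φ M)) - projVec P (K (φ N)) = u (φ M) - u (φ N) from rfl, this]
    calc dist (u (φ M)) (u (φ N)) ≤ dist (u (φ M)) b + dist (u (φ N)) b :=
          dist_triangle_right _ _ _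
      _ ≤ δ := by linarith

/-- Failure of residual control: for constant coefficient `A ≡ A₀`, `n > d` and
`P` with `ℚ`-linearly independent columns, for every `ε > 0` there is a nonzero
exponential `V = e^{ik̄·y}` (for which `‖div(Pᵀ A₀ P∇V)‖²_{L²} = A₀²|Pk̄|⁴` and
`‖V‖²_{H̄_{P,0}^1} = |Pk̄|²`) whose residual/energy quotient is at most `ε`. -/
theorem stmt18 {d n : ℕ} (hdn : d < n) (P : Matrix (Fin d) (Fin n) ℝ)
    (hP : QLinIndep P) (A₀ : ℝ) :
    ∀ ε : ℝ, 0 < ε → ∃ k : Fin n → ℤ, k ≠ 0 ∧ 0 < ‖projVec P k‖ ∧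
      (A₀ ^ 2 * ‖projVec P k‖ ^ 4) / ‖projVec P k‖ ^ 2 ≤ ε := by
  intro ε hε
  have hA : (0:ℝ) < A₀ ^ 2 + 1 := by positivity
  set δ : ℝ := Real.sqrt (ε / (A₀ ^ 2 + 1)) with hδdef
  have hδ : 0 < δ := Real.sqrt_pos.mpr (by positivity)
  obtain ⟨k, hk0, hksmall⟩ := small_projVec hdn P δ hδ
  have hpos : 0 < ‖projVec P k‖ := norm_pos_iff.mpr (projVec_ne_zero hP hk0)
  refine ⟨k, hk0, hpos, ?_⟩
  set t : ℝ := ‖projVec P k‖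
  have ht2 : t ^ 2 ≤ ε / (A₀ ^ 2 + 1) := by
    have := Real.sq_sqrt (le_of_lt (show (0:ℝ) < ε / (A₀ ^ 2 + 1) by positivity))
    nlinarith
  have hq : (A₀ ^ 2 * t ^ 4) / t ^ 2 = A₀ ^ 2 * t ^ 2 := by
    rw [show t ^ 4 = t ^ 2 * t ^ 2 by ring, ← mul_assoc,
      mul_div_assoc, div_self (by positivity), mul_one]
  rw [hq]
  calc A₀ ^ 2 * t ^ 2 ≤ A₀ ^ 2 * (ε / (A₀ ^ 2 + 1)) := by
        apply mul_le_mul_of_nonneg_left ht2 (by positivity)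
    _ ≤ ε := by
        rw [mul_div_assoc']
        rw [div_le_iff₀ hA]
        nlinarith
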